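/- Let P = (g, d, B, A, φ, br, rm) be a portrait and 𝒯 a B-marked stable tree. If two P-decorations of 𝒯 are Hurwitz equivalent, then their induced source graphs 𝒢 are isomorphic as A-marked vertex-weighted graphs: there is a graph isomorphism between them preserving the vertex weights g_{(v,O)} and sending the leg labelled a to the leg labelled a for each a ∈ A. (This is the paper's assertion that the stabilised source graph 𝒢′ ∈ Stab_{g,A} is independent of the representative P-decorated tree.) -/

import Mathlib

open scoped Classical

/-- A `B`-marked graph (with legs), in the half-edge formalism: a finite set `H` of
half-edges, a finite set `V` of vertices, an attachment map `base`, an involution `pair`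
whose 2-element orbits are the edges and whose fixed points are the legs, and a labelling
of the legs by `B`. -/
structure BMarkedGraph (B : Type) : Type 1 where
  /-- the half-edges -/
  H : Type
  /-- the vertices -/
  V : Type
  [fintH : Fintype H]
  [decH : DecidableEq H]
  [fintV : Fintype V]
  [decV : DecidableEq V]
  /-- the vertex a half-edge is attached to -/
  base : H → V
  /-- the edge-pairing involution; legs are exactly its fixed points -/
  pair : H → H
  pair_invol : ∀ h, pair (pair h) = h
  /-- the labelling of the legs by `B` -/
  leg : B → H
  leg_inj : Function.Injective leg
  pair_leg : ∀ b, pair (leg b) = leg b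
  leg_of_fixed : ∀ h, pair h = h → ∃ b, leg b = h

attribute [instance] BMarkedGraph.fintH BMarkedGraph.decH BMarkedGraph.fintV BMarkedGraph.decV

namespace BMarkedGraph

variable {B : Type} (T : BMarkedGraph B)

/-- Two vertices are adjacent if some edge joins them. -/
def Adj (v w : T.V) : Prop :=
  ∃ h, T.pair h ≠ h ∧ T.base h = v ∧ T.base (T.pair h) = w

/-- A `B`-marked graph is a stable tree if it has no self-loops, is connected, has exactly
one fewer edge than it has vertices (so that it is a tree), and every vertex has total
valence (incident edge half-edges plus legs) at least three. -/
def IsStableTree : Prop :=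
  (∀ h, T.pair h ≠ h → T.base (T.pair h) ≠ T.base h) ∧
  (∀ v w : T.V, Relation.ReflTransGen T.Adj v w) ∧
  (Fintype.card {h : T.H // T.pair h ≠ h} + 2 = 2 * Fintype.card T.V) ∧
  (∀ v : T.V, 3 ≤ Fintype.card {h : T.H // T.base h = v})

/-- Adjacency avoiding the vertex `v`. -/
def AdjAvoid (v x y : T.V) : Prop := x ≠ v ∧ y ≠ v ∧ T.Adj x y

/-- `T.InSide h k` says that the half-edge `k` lies in the connected component of
`T ∖ {base h}` containing `h`: either `k = h`, or `h` belongs to an edge and the base of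
`k` is reachable from the other endpoint of that edge without passing through `base h`. -/
def InSide (h k : T.H) : Prop :=
  k = h ∨ (T.pair h ≠ h ∧ k ≠ h ∧
    Relation.ReflTransGen (T.AdjAvoid (T.base h)) (T.base (T.pair h)) (T.base k))

end BMarkedGraph

/-- A portrait `P = (g, d, B, A, φ, br, rm)`: the combinatorial data prescribing the
branching behaviour of the branched covers under consideration.  Here `br b` is a
partition of `d` recorded as a multiset of positive parts summing to `d`. -/
structure Portrait (B A : Type) [Fintype B] [DecidableEq B] [Fintype A] [DecidableEq A] where
  /-- the source genus -/
  g : ℕ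
  /-- the degree -/
  d : ℕ
  d_pos : 1 ≤ d
  card_B : 3 ≤ Fintype.card B
  card_A : (2 : ℤ) - 2 * (g : ℤ) - (Fintype.card A : ℤ) < 0
  /-- the function on the source marks -/
  phi : A → B
  /-- the branch profiles of the target marks: partitions of `d` -/
  br : B → Multiset ℕ
  /-- the ramifications (local degrees) at the source marks -/
  rm : A → ℕ
  rm_pos : ∀ a, 1 ≤ rm a
  br_pos : ∀ b, ∀ n ∈ br b, 1 ≤ n
  br_sum : ∀ b, (br b).sum = d
  /-- the Riemann–Hurwitz formula -/
  riemannHurwitz :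
    (∑ b : B, ((d : ℤ) - ((br b).card : ℤ))) - 2 * (g : ℤ) = 2 * (d : ℤ) - 2
  /-- for each `b ∈ B`, `(rm a)_{a ∈ φ⁻¹ b}` is a sub-multiset of `br b` -/
  rm_sub : ∀ b : B, (Finset.univ.filter fun a => phi a = b).val.map rm ≤ br b

variable {B A : Type} [Fintype B] [DecidableEq B] [Fintype A] [DecidableEq A]

/-- The raw data `(ord, mon, cyc)` of a `P`-decoration of the `B`-marked graph `T`.
A cycle of a leg permutation is recorded by one of its points, so `cyc : A → Fin P.d`
sends `a` to a point of the cycle `cyc(a)` of `mon(φ a)`. -/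
structure PreDecoration (P : Portrait B A) (T : BMarkedGraph B) where
  /-- the cyclic orderings of the half-edges around the vertices -/
  ord : Equiv.Perm T.H
  /-- the permutation attached to each half-edge -/
  mon : T.H → Equiv.Perm (Fin P.d)
  /-- a point of the cycle labelled by each source mark -/
  cyc : A → Fin P.d

/-- `prodAlong ord mon h n = mon (ord^(n-1) h) * ⋯ * mon (ord h) * mon h`: the
right-to-left product of the permutations along `n` successive half-edges of the
`ord`-cycle starting at `h`. -/
def prodAlong {H : Type} {d : ℕ} (ord : Equiv.Perm H) (mon : H → Equiv.Perm (Fin d)) :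
    H → ℕ → Equiv.Perm (Fin d)
  | _, 0 => 1
  | h, n + 1 => prodAlong ord mon (ord h) n * mon h

/-- `(ord, mon, cyc)` is a `P`-decoration of `T`:  `ord` preserves the vertices and has
exactly one cycle for each vertex, consisting of all the half-edges incident with it;
(i) the cyclic product of the permutations around each vertex is the identity;
(ii) the permutations on the two half-edges of an edge are inverse;
(iii) each leg permutation `mon (leg b)` has cycle type `br b` (as a partition of `d`,
  fixed points included);
(iv) `cyc` is injective into the disjoint union of the cycles of the leg permutations,
  and the cycle of `mon (leg (φ a))` through `cyc a` has length `rm a`;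
(v) the leg permutations generate a transitive subgroup of `S_d`. -/
def IsDecoration (P : Portrait B A) (T : BMarkedGraph B) (D : PreDecoration P T) : Prop :=
  (∀ h, T.base (D.ord h) = T.base h) ∧
  (∀ h k, T.base h = T.base k → ∃ n : ℕ, (D.ord ^ n) h = k) ∧
  (∀ h (n : ℕ), (D.ord ^ n) h = h → prodAlong D.ord D.mon h n = 1) ∧
  (∀ h, T.pair h ≠ h → D.mon (T.pair h) = (D.mon h)⁻¹) ∧
  (∀ b, (Equiv.Perm.partition (D.mon (T.leg b))).parts = P.br b) ∧
  (∀ a a', P.phi a = P.phi a' →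
    (D.mon (T.leg (P.phi a))).SameCycle (D.cyc a) (D.cyc a') → a = a') ∧
  (∀ a, Function.minimalPeriod (⇑(D.mon (T.leg (P.phi a)))) (D.cyc a) = P.rm a) ∧
  (∀ i j : Fin P.d, ∃ π ∈ Subgroup.closure (Set.range fun b => D.mon (T.leg b)), π i = j)

/-- Global conjugation of a decoration by `τ ∈ S_d`. -/
def globalConj {P : Portrait B A} {T : BMarkedGraph B} (τ : Equiv.Perm (Fin P.d))
    (D : PreDecoration P T) : PreDecoration P T where
  ord := D.ord
  mon := fun h => τ * D.mon h * τ⁻¹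
  cyc := fun a => τ (D.cyc a)

/-- The anticlockwise braid move at the half-edge `h`: with `h̃ = ord h`, the half-edge
`h` is shifted one step anticlockwise through `h̃`, and the permutations and cycle labels
on the component of `T ∖ {base h}` containing `h` are conjugated by `mon h̃`. -/
noncomputable def braidACW {P : Portrait B A} {T : BMarkedGraph B}
    (D : PreDecoration P T) (h : T.H) : PreDecoration P T where
  ord := Equiv.swap h (D.ord h) * D.ord * (Equiv.swap h (D.ord h))⁻¹
  mon := fun k =>
    if T.InSide h k then D.mon (D.ord h) * D.mon k * (D.mon (D.ord h))⁻¹ else D.mon k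
  cyc := fun a =>
    if T.InSide h (T.leg (P.phi a)) then D.mon (D.ord h) (D.cyc a) else D.cyc a

/-- The clockwise braid move at the half-edge `h`: with `h̃ = ord⁻¹ h`, the half-edge
`h` is shifted one step clockwise through `h̃`, and the permutations and cycle labels
on the component of `T ∖ {base h}` containing `h` are conjugated by `(mon h̃)⁻¹`. -/
noncomputable def braidCW {P : Portrait B A} {T : BMarkedGraph B}
    (D : PreDecoration P T) (h : T.H) : PreDecoration P T where
  ord := Equiv.swap h (D.ord⁻¹ h) * D.ord * (Equiv.swap h (D.ord⁻¹ h))⁻¹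
  mon := fun k =>
    if T.InSide h k then (D.mon (D.ord⁻¹ h))⁻¹ * D.mon k * D.mon (D.ord⁻¹ h) else D.mon k
  cyc := fun a =>
    if T.InSide h (T.leg (P.phi a)) then (D.mon (D.ord⁻¹ h))⁻¹ (D.cyc a) else D.cyc a
/-- One step of Hurwitz equivalence: a global conjugation, or a braid move
(anticlockwise or clockwise). -/
inductive HurwitzStep (P : Portrait B A) (T : BMarkedGraph B) :
    PreDecoration P T → PreDecoration P T → Prop
  | conj (τ : Equiv.Perm (Fin P.d)) (D : PreDecoration P T) :
      HurwitzStep P T D (globalConj τ D)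
  | acw (D : PreDecoration P T) (h : T.H) : HurwitzStep P T D (braidACW D h)
  | cw (D : PreDecoration P T) (h : T.H) : HurwitzStep P T D (braidCW D h)

/-- Two decorations are Hurwitz equivalent if one is obtained from the other by a finite
sequence of global conjugations and braid moves. -/
def HurwitzEquiv (P : Portrait B A) (T : BMarkedGraph B)
    (D D' : PreDecoration P T) : Prop :=
  Relation.ReflTransGen (HurwitzStep P T) D D'
/-- The cycle of the permutation `σ` through the point `x`, as the finset of points in the
same cycle as `x` (a fixed point gives a cycle of length one). -/
noncomputable def cycleFinset {d : ℕ} (σ : Equiv.Perm (Fin d)) (x : Fin d) :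
    Finset (Fin d) :=
  Finset.univ.filter fun y => σ.SameCycle x y

/-- `c` is (the underlying point set of) a cycle of `σ`, fixed points included. -/
def IsCycleOf {d : ℕ} (σ : Equiv.Perm (Fin d)) (c : Finset (Fin d)) : Prop :=
  ∃ x, c = cycleFinset σ x

variable {P : Portrait B A} {T : BMarkedGraph B}

/-- The subgroup of `S_d` generated by the permutations on the half-edges incident with
the vertex `v`. -/
def monAt (D : PreDecoration P T) (v : T.V) : Subgroup (Equiv.Perm (Fin P.d)) :=
  Subgroup.closure {σ | ∃ h, T.base h = v ∧ σ = D.mon h}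

/-- The orbit of the point `x` under the subgroup generated by the permutations at `v`. -/
noncomputable def orbitAt (D : PreDecoration P T) (v : T.V) (x : Fin P.d) :
    Finset (Fin P.d) :=
  Finset.univ.filter fun y => ∃ π ∈ monAt D v, π x = y

/-- `O` is an orbit of `{1, …, d}` under the subgroup generated by the permutations on the
half-edges incident with `v`. -/
def IsOrbitAt (D : PreDecoration P T) (v : T.V) (O : Finset (Fin P.d)) : Prop :=
  ∃ x, O = orbitAt D v x

/-- The cycles of `σ` that are contained in the set `O`. -/
noncomputable def cyclesIn {d : ℕ} (σ : Equiv.Perm (Fin d)) (O : Finset (Fin d)) :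
    Finset (Finset (Fin d)) :=
  (O.image fun x => cycleFinset σ x).filter fun c => c ⊆ O

/-- `∑_c (len(c) − 1)`, the sum over the cycles `c ⊆ O` of the permutations on the
half-edges incident with `v`. -/
noncomputable def localSum (D : PreDecoration P T) (v : T.V) (O : Finset (Fin P.d)) : ℤ :=
  ∑ h ∈ Finset.univ.filter (fun h => T.base h = v),
    ∑ c ∈ cyclesIn (D.mon h) O, ((c.card : ℤ) - 1)

/-- The local Riemann–Hurwitz equation at the vertex `(v, O)` of the source graph:
`∑_c (len(c) − 1) − 2 n = 2 |O| − 2`. -/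
def LocalRH (D : PreDecoration P T) (v : T.V) (O : Finset (Fin P.d)) (n : ℕ) : Prop :=
  localSum D v O - 2 * (n : ℤ) = 2 * (O.card : ℤ) - 2

/-- The orbit (under the subgroup generated by the permutations at `v`) containing the
point set `c`. -/
noncomputable def orbitOfFinset (D : PreDecoration P T) (v : T.V)
    (c : Finset (Fin P.d)) : Finset (Fin P.d) :=
  Finset.univ.filter fun y => ∃ x ∈ c, y ∈ orbitAt D v x

/-- The vertex `(base h, O)` of the source graph `𝒢` to which the half-edge `(h, c)`
(a cycle `c` of `mon h`) is attached: `O` is the orbit at `base h` containing `c`. -/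
noncomputable def attachVertex (D : PreDecoration P T) (q : T.H × Finset (Fin P.d)) :
    T.V × Finset (Fin P.d) :=
  (T.base q.1, orbitOfFinset D (T.base q.1) q.2)

/-- The vertex set of the source graph `𝒢` of the decoration `D`. -/
def GVset (D : PreDecoration P T) : Set (T.V × Finset (Fin P.d)) :=
  {p | IsOrbitAt D p.1 p.2}

/-- The half-edge set of the source graph `𝒢` of the decoration `D`: the pairs `(h, c)`
with `c` a cycle of `mon h`. -/
def GHset (D : PreDecoration P T) : Set (T.H × Finset (Fin P.d)) :=
  {q | IsCycleOf (D.mon q.1) q.2}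

/-- An isomorphism of the source graphs of `D₁` and `D₂`, as `A`-marked vertex-weighted
graphs: bijections between the vertex sets and between the half-edge sets, commuting with
the attachment of half-edges to vertices and with the edge pairing
`(h, c) ↦ (pair h, c)`, preserving the genus weights (i.e. the local Riemann–Hurwitz
equations), and sending the leg labelled `a` to the leg labelled `a` for each `a ∈ A`. -/
def IsoSourceGraphs (D₁ D₂ : PreDecoration P T) : Prop :=
  ∃ (eV : T.V × Finset (Fin P.d) → T.V × Finset (Fin P.d))
    (eH : T.H × Finset (Fin P.d) → T.H × Finset (Fin P.d)),
    Set.BijOn eV (GVset D₁) (GVset D₂) ∧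
    Set.BijOn eH (GHset D₁) (GHset D₂) ∧
    (∀ q ∈ GHset D₁, attachVertex D₂ (eH q) = eV (attachVertex D₁ q)) ∧
    (∀ q ∈ GHset D₁, eH (T.pair q.1, q.2) = (T.pair (eH q).1, (eH q).2)) ∧
    (∀ p ∈ GVset D₁, ∀ n : ℕ, LocalRH D₁ p.1 p.2 n ↔ LocalRH D₂ (eV p).1 (eV p).2 n) ∧
    (∀ a : A, eH (T.leg (P.phi a), cycleFinset (D₁.mon (T.leg (P.phi a))) (D₁.cyc a)) =
      (T.leg (P.phi a), cycleFinset (D₂.mon (T.leg (P.phi a))) (D₂.cyc a)))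


/-! ### Auxiliary material -/

section TreeFacts

/-- chains of length `n` for a relation, extended at the end. -/
def chainN {α : Type*} (R : α → α → Prop) : ℕ → α → α → Prop
  | 0, x, y => x = y
  | n + 1, x, y => ∃ z, chainN R n x z ∧ R z y

lemma reflTransGen_iff_chainN {α : Type*} {R : α → α → Prop} {x y : α} :
    Relation.ReflTransGen R x y ↔ ∃ n, chainN R n x y := by
  constructor
  · intro hxy
    induction hxy with
    | refl => exact ⟨0, rfl⟩
    | tail _ hstep ih => obtain ⟨n, hc⟩ := ih; exact ⟨n + 1, _, hc, hstep⟩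
  · rintro ⟨n, hc⟩
    induction n generalizing y with
    | zero => simp only [chainN] at hc; subst hc; exact .refl
    | succ n ih => obtain ⟨z, hc, hstep⟩ := hc; exact (ih hc).tail hstep

variable {B₀ : Type} (T₀ : BMarkedGraph B₀)

lemma bm_adj_symm {x y : T₀.V} (hxy : T₀.Adj x y) : T₀.Adj y x := by
  obtain ⟨e, he, rfl, rfl⟩ := hxy
  refine ⟨T₀.pair e, ?_, rfl, ?_⟩
  · rw [T₀.pair_invol]; exact Ne.symm he
  · rw [T₀.pair_invol]

lemma bm_avoid_ne {v x y : T₀.V} (hx : x ≠ v)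
    (hr : Relation.ReflTransGen (T₀.AdjAvoid v) x y) : y ≠ v := by
  induction hr with
  | refl => exact hx
  | tail _ hstep _ => exact hstep.2.1

/-- **Tree separation**: in a stable tree, the other endpoints of two distinct edges at a
vertex `v` are not connected avoiding `v`. -/
lemma tree_sep (hT : T₀.IsStableTree) {v : T₀.V} {h k : T₀.H}
    (hh : T₀.base h = v) (hk : T₀.base k = v) (hhk : h ≠ k)
    (hh' : T₀.pair h ≠ h) (hk' : T₀.pair k ≠ k) :
    ¬ Relation.ReflTransGen (T₀.AdjAvoid v) (T₀.base (T₀.pair h)) (T₀.base (T₀.pair k)) := by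
  intro hreach
  obtain ⟨hnl, hconn, hcount, _⟩ := hT
  have hex : ∀ x : T₀.V, ∃ n, chainN T₀.Adj n v x :=
    fun x => reflTransGen_iff_chainN.1 (hconn v x)
  set dist : T₀.V → ℕ := fun x => Nat.find (hex x) with hdist
  have dist_v : dist v = 0 := (Nat.find_eq_zero (hex v)).2 rfl
  have dist_pos : ∀ x : T₀.V, x ≠ v → 1 ≤ dist x := by
    intro x hx
    rcases Nat.eq_zero_or_pos (dist x) with h0 | h1
    · have : v = x := (Nat.find_eq_zero (hex x)).1 h0
      exact absurd this.symm hx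
    · exact h1
  have dist_le_succ : ∀ x y : T₀.V, T₀.Adj x y → dist y ≤ dist x + 1 := by
    intro x y hxy
    exact Nat.find_le ⟨x, Nat.find_spec (hex x), hxy⟩
  have hpred : ∀ x : T₀.V, x ≠ v →
      ∃ e, T₀.base e = x ∧ T₀.pair e ≠ e ∧ dist (T₀.base (T₀.pair e)) + 1 = dist x := by
    intro x hx
    have hspec := Nat.find_spec (hex x)
    obtain ⟨m, hm⟩ : ∃ m, dist x = m + 1 := ⟨dist x - 1, by have := dist_pos x hx; omega⟩
    rw [show Nat.find (hex x) = dist x from rfl, hm] at hspec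
    obtain ⟨z, hc, hzx⟩ := hspec
    obtain ⟨e, he, hbe, hbpe⟩ := hzx
    have hdz : dist z = m := by
      have h1 : dist z ≤ m := Nat.find_le hc
      have h2 : dist x ≤ dist z + 1 := dist_le_succ z x ⟨e, he, hbe, hbpe⟩
      omega
    refine ⟨T₀.pair e, hbpe, ?_, ?_⟩
    · rw [T₀.pair_invol]; exact Ne.symm he
    · rw [T₀.pair_invol, hbe, hdz, hm]
  choose f hf1 hf2 hf3 using hpred
  set F : {x : T₀.V // x ≠ v} → T₀.H := fun x => f x.1 x.2 with hF
  have base_F : ∀ x : {x : T₀.V // x ≠ v}, T₀.base (F x) = x.1 := fun x => hf1 x.1 x.2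
  have pair_F : ∀ x : {x : T₀.V // x ≠ v}, T₀.pair (F x) ≠ F x := fun x => hf2 x.1 x.2
  have dist_F : ∀ x : {x : T₀.V // x ≠ v}, dist (T₀.base (T₀.pair (F x))) + 1 = dist x.1 :=
    fun x => hf3 x.1 x.2
  set g : {x : T₀.V // x ≠ v} × Bool → {e : T₀.H // T₀.pair e ≠ e} :=
    fun p => if p.2 then ⟨T₀.pair (F p.1), by rw [T₀.pair_invol]; exact Ne.symm (pair_F p.1)⟩
      else ⟨F p.1, pair_F p.1⟩ with hg
  have key_ne : ∀ x y : {x : T₀.V // x ≠ v}, F x = T₀.pair (F y) → False := by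
    intro x y hxy
    have e1 : dist (T₀.base (T₀.pair (F x))) + 1 = dist x.1 := dist_F x
    have e2 : dist (T₀.base (T₀.pair (F y))) + 1 = dist y.1 := dist_F y
    have b1 : T₀.base (F x) = x.1 := base_F x
    have b2 : T₀.base (F y) = y.1 := base_F y
    have h1 : T₀.pair (F x) = F y := by rw [hxy, T₀.pair_invol]
    rw [← hxy, b1] at e2
    rw [h1, b2] at e1
    omega
  have hginj : Function.Injective g := by
    rintro ⟨x, bx⟩ ⟨y, by'⟩ hxy
    have hval : (g (x, bx)).1 = (g (y, by')).1 := congrArg Subtype.val hxy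
    cases bx <;> cases by' <;>
      simp only [hg, if_true, if_false, Bool.false_eq_true, ite_true, ite_false] at hval
    · have : x = y := Subtype.ext (by rw [← base_F x, ← base_F y, hval])
      rw [this]
    · exact absurd hval (fun hE => key_ne x y hE)
    · exact absurd hval.symm (fun hE => key_ne y x hE)
    · have hval2 : F x = F y := by rw [← T₀.pair_invol (F x), hval, T₀.pair_invol]
      have : x = y := Subtype.ext (by rw [← base_F x, ← base_F y, hval2])
      rw [this]
  have hcardV : 1 ≤ Fintype.card T₀.V := Fintype.card_pos_iff.2 ⟨v⟩
  have hcard1 : Fintype.card {x : T₀.V // x ≠ v} = Fintype.card T₀.V - 1 := by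
    have h1 : Fintype.card {x : T₀.V // ¬ (x = v)} 
        = Fintype.card T₀.V - Fintype.card {x : T₀.V // x = v} :=
      Fintype.card_subtype_compl _
    rw [Fintype.card_subtype_eq] at h1
    rw [← h1]
  have hcard : Fintype.card ({x : T₀.V // x ≠ v} × Bool)
      = Fintype.card {e : T₀.H // T₀.pair e ≠ e} := by
    rw [Fintype.card_prod, Fintype.card_bool, hcard1]
    omega
  have hgsurj : Function.Surjective g :=
    ((Fintype.bijective_iff_injective_and_card g).2 ⟨hginj, hcard⟩).2
  have classify : ∀ e : T₀.H, T₀.pair e ≠ e →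
      (∃ hx : T₀.base e ≠ v, F ⟨T₀.base e, hx⟩ = e) ∨
      (∃ hy : T₀.base (T₀.pair e) ≠ v, F ⟨T₀.base (T₀.pair e), hy⟩ = T₀.pair e) := by
    intro e he
    obtain ⟨⟨⟨x1, hx1⟩, b⟩, hgx⟩ := hgsurj ⟨e, he⟩
    have hval := congrArg Subtype.val hgx
    cases b with
    | false =>
      simp only [hg, ite_false, Bool.false_eq_true, if_false] at hval
      have hbx : T₀.base e = x1 := by rw [← hval]; exact base_F _
      left
      refine ⟨by rw [hbx]; exact hx1, ?_⟩
      have : (⟨T₀.base e, by rw [hbx]; exact hx1⟩ : {x : T₀.V // x ≠ v}) = ⟨x1, hx1⟩ :=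
        Subtype.ext hbx
      rw [this]; exact hval
    | true =>
      simp only [hg, ite_true, if_true] at hval
      have hval2 : F ⟨x1, hx1⟩ = T₀.pair e := by
        rw [← T₀.pair_invol (F ⟨x1, hx1⟩), hval]
      have hbx : T₀.base (T₀.pair e) = x1 := by rw [← hval2]; exact base_F _
      right
      refine ⟨by rw [hbx]; exact hx1, ?_⟩
      have : (⟨T₀.base (T₀.pair e), by rw [hbx]; exact hx1⟩ : {x : T₀.V // x ≠ v})
          = ⟨x1, hx1⟩ := Subtype.ext hbx
      rw [this]; exact hval2
  set par : T₀.V → T₀.V := fun x => if hx : x ≠ v then T₀.base (T₀.pair (f x hx)) else v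
    with hpar
  have par_dist : ∀ x : T₀.V, x ≠ v → dist (par x) + 1 = dist x := by
    intro x hx
    show dist (if hx : x ≠ v then T₀.base (T₀.pair (f x hx)) else v) + 1 = dist x
    rw [dif_pos hx]; exact hf3 x hx
  have step_par : ∀ x y : T₀.V, T₀.Adj x y → x ≠ v → y ≠ v → par x = y ∨ par y = x := by
    intro x y hxy hx hy
    obtain ⟨e, he, rfl, rfl⟩ := hxy
    rcases classify e he with ⟨hx', hFe⟩ | ⟨hy', hFe⟩
    · left
      show (if hx : T₀.base e ≠ v then T₀.base (T₀.pair (f (T₀.base e) hx)) else v) = _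
      rw [dif_pos hx']
      rw [show f (T₀.base e) hx' = e from hFe]
    · right
      show (if hx : T₀.base (T₀.pair e) ≠ v then
        T₀.base (T₀.pair (f (T₀.base (T₀.pair e)) hx)) else v) = _
      rw [dif_pos hy']
      rw [show f (T₀.base (T₀.pair e)) hy' = T₀.pair e from hFe, T₀.pair_invol]
  have hav : T₀.base (T₀.pair h) ≠ v := by rw [← hh]; exact hnl h hh'
  have hbv : T₀.base (T₀.pair k) ≠ v := by rw [← hk]; exact hnl k hk'
  have hfa : F ⟨T₀.base (T₀.pair h), hav⟩ = T₀.pair h := by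
    rcases classify h hh' with ⟨hx, _⟩ | ⟨hy, hFe⟩
    · exact absurd hh hx
    · exact hFe
  have hfb : F ⟨T₀.base (T₀.pair k), hbv⟩ = T₀.pair k := by
    rcases classify k hk' with ⟨hx, _⟩ | ⟨hy, hFe⟩
    · exact absurd hk hx
    · exact hFe
  have hab : T₀.base (T₀.pair h) ≠ T₀.base (T₀.pair k) := by
    intro hE
    apply hhk
    have h1 : T₀.pair h = T₀.pair k := by
      rw [← hfa, ← hfb]; congr 1; exact Subtype.ext hE
    have h2 := congrArg T₀.pair h1
    rwa [T₀.pair_invol, T₀.pair_invol] at h2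
  have par_a : par (T₀.base (T₀.pair h)) = v := by
    show (if hx : T₀.base (T₀.pair h) ≠ v then
      T₀.base (T₀.pair (f (T₀.base (T₀.pair h)) hx)) else v) = v
    rw [dif_pos hav, show f (T₀.base (T₀.pair h)) hav = T₀.pair h from hfa,
      T₀.pair_invol, hh]
  have par_b : par (T₀.base (T₀.pair k)) = v := by
    show (if hx : T₀.base (T₀.pair k) ≠ v then
      T₀.base (T₀.pair (f (T₀.base (T₀.pair k)) hx)) else v) = v
    rw [dif_pos hbv, show f (T₀.base (T₀.pair k)) hbv = T₀.pair k from hfb,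
      T₀.pair_invol, hk]
  have dist_a : dist (T₀.base (T₀.pair h)) = 1 := by
    have := par_dist _ hav; rw [par_a, dist_v] at this; omega
  have dist_b : dist (T₀.base (T₀.pair k)) = 1 := by
    have := par_dist _ hbv; rw [par_b, dist_v] at this; omega
  have inv : ∀ w, Relation.ReflTransGen (T₀.AdjAvoid v) (T₀.base (T₀.pair h)) w →
      (w ≠ v ∧ par^[dist w - 1] w = T₀.base (T₀.pair h)) := by
    intro w hw
    induction hw with
    | refl => refine ⟨hav, ?_⟩; rw [dist_a]; rfl
    | @tail c w' hac hstep ih =>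
      obtain ⟨hc_ne, hw_ne, hadj⟩ := hstep
      obtain ⟨_, hanc⟩ := ih
      refine ⟨hw_ne, ?_⟩
      rcases step_par _ _ hadj hc_ne hw_ne with hpc | hpw
      · have h1 := par_dist c hc_ne
        rw [hpc] at h1
        have h2 := dist_pos _ hw_ne
        have h3 : dist c - 1 = (dist w' - 1) + 1 := by omega
        rw [h3, Function.iterate_succ_apply, hpc] at hanc
        exact hanc
      · have h1 := par_dist w' hw_ne
        rw [hpw] at h1
        have h2 := dist_pos _ hc_ne
        have h3 : dist w' - 1 = (dist c - 1) + 1 := by omega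
        rw [h3, Function.iterate_succ_apply, hpw]
        exact hanc
  obtain ⟨_, hfin⟩ := inv _ hreach
  rw [dist_b] at hfin
  simp only [Nat.sub_self, Function.iterate_zero_apply] at hfin
  exact hab hfin.symm

/-- `InSide` is compatible with the edge-pairing. -/
lemma inSide_pair (hT : T₀.IsStableTree) (h k : T₀.H) :
    T₀.InSide h (T₀.pair k) ↔ T₀.InSide h k := by
  have hnl := hT.1
  suffices H : ∀ k, T₀.InSide h k → T₀.InSide h (T₀.pair k) by
    constructor
    · intro hin; have := H _ hin; rwa [T₀.pair_invol] at this
    · exact H k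
  intro k hin
  by_cases hpk : T₀.pair k = k
  · rwa [hpk]
  rcases hin with rfl | ⟨hph, hkh, hreach⟩
  · exact Or.inr ⟨hpk, hpk, .refl⟩
  by_cases hpkh : T₀.pair k = h
  · rw [hpkh]; exact Or.inl rfl
  by_cases hbpk : T₀.base (T₀.pair k) = T₀.base h
  · exfalso
    have hsep := tree_sep T₀ ⟨hnl, hT.2.1, hT.2.2.1, hT.2.2.2⟩ (v := T₀.base h)
      (h := h) (k := T₀.pair k) rfl hbpk (Ne.symm hpkh) hph
      (by rw [T₀.pair_invol]; exact Ne.symm hpk)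
    apply hsep
    rw [T₀.pair_invol]
    exact hreach
  · refine Or.inr ⟨hph, hpkh, hreach.tail ?_⟩
    exact ⟨bm_avoid_ne T₀ (hnl h hph) hreach, hbpk, k, hpk, rfl, rfl⟩

end TreeFacts


section IsoHelpers

lemma mem_cycleFinset {d : ℕ} (σ : Equiv.Perm (Fin d)) (x y : Fin d) :
    y ∈ cycleFinset σ x ↔ σ.SameCycle x y := by
  simp [cycleFinset]

lemma cycleFinset_conj {d : ℕ} (π σ : Equiv.Perm (Fin d)) (x : Fin d) :
    cycleFinset (π * σ * π⁻¹) (π x) = (cycleFinset σ x).image π := by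
  ext y
  rw [mem_cycleFinset, Equiv.Perm.sameCycle_conj, Finset.mem_image]
  simp only [Equiv.Perm.inv_def, Equiv.symm_apply_apply]
  constructor
  · intro hxy
    exact ⟨π⁻¹ y, (mem_cycleFinset σ x _).2 hxy, by simp⟩
  · rintro ⟨z, hz, rfl⟩
    simpa using (mem_cycleFinset σ x z).1 hz

lemma cyclesIn_conj {d : ℕ} (π σ : Equiv.Perm (Fin d)) (O : Finset (Fin d)) :
    cyclesIn (π * σ * π⁻¹) (O.image π) = (cyclesIn σ O).image (Finset.image π) := by
  ext c
  unfold cyclesIn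
  rw [Finset.mem_filter]
  constructor
  · rintro ⟨hc, hsub⟩
    rw [Finset.mem_image] at hc
    obtain ⟨x', hx', rfl⟩ := hc
    rw [Finset.mem_image] at hx'
    obtain ⟨x, hx, rfl⟩ := hx'
    rw [cycleFinset_conj] at hsub ⊢
    refine Finset.mem_image_of_mem _ ?_
    rw [Finset.mem_filter]
    exact ⟨Finset.mem_image_of_mem _ hx,
      (Finset.image_subset_image_iff π.injective).1 hsub⟩
  · intro hc
    rw [Finset.mem_image] at hc
    obtain ⟨c', hc', rfl⟩ := hc
    rw [Finset.mem_filter, Finset.mem_image] at hc'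
    obtain ⟨⟨x, hx, rfl⟩, hsub⟩ := hc'
    constructor
    · rw [Finset.mem_image]
      exact ⟨π x, Finset.mem_image_of_mem _ hx, cycleFinset_conj π σ x⟩
    · exact Finset.image_subset_image hsub

lemma sum_cyclesIn_conj {d : ℕ} (π σ : Equiv.Perm (Fin d)) (O : Finset (Fin d)) :
    ∑ c ∈ cyclesIn (π * σ * π⁻¹) (O.image π), ((c.card : ℤ) - 1)
      = ∑ c ∈ cyclesIn σ O, ((c.card : ℤ) - 1) := by
  rw [cyclesIn_conj,
    Finset.sum_image (fun c _ c' _ hcc => Finset.image_injective π.injective hcc)]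
  apply Finset.sum_congr rfl
  intro c _
  rw [Finset.card_image_of_injective _ π.injective]

lemma monAt_map_conj (D E : PreDecoration P T) (v : T.V) (π : Equiv.Perm (Fin P.d))
    (hE : ∀ k, T.base k = v → E.mon k = π * D.mon k * π⁻¹) :
    monAt E v = (monAt D v).map (MulAut.conj π).toMonoidHom := by
  unfold monAt
  rw [MonoidHom.map_closure]
  congr 1
  ext s
  simp only [Set.mem_image, Set.mem_setOf_eq, MulEquiv.coe_toMonoidHom, MulAut.conj_apply]
  constructor
  · rintro ⟨k, hk, rfl⟩
    exact ⟨D.mon k, ⟨k, hk, rfl⟩, (hE k hk).symm⟩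
  · rintro ⟨s₀, ⟨k, hk, rfl⟩, rfl⟩
    exact ⟨k, hk, (hE k hk).symm⟩

lemma mem_orbitAt (D : PreDecoration P T) (v : T.V) (x y : Fin P.d) :
    y ∈ orbitAt D v x ↔ ∃ π ∈ monAt D v, π x = y := by
  simp [orbitAt]

lemma orbitAt_conj (D E : PreDecoration P T) (v : T.V) (π : Equiv.Perm (Fin P.d))
    (hE : monAt E v = (monAt D v).map (MulAut.conj π).toMonoidHom) (x : Fin P.d) :
    orbitAt E v (π x) = (orbitAt D v x).image π := by
  ext y
  rw [mem_orbitAt, Finset.mem_image]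
  constructor
  · rintro ⟨ρ, hρ, rfl⟩
    rw [hE, Subgroup.mem_map] at hρ
    obtain ⟨ρ₀, hρ₀, rfl⟩ := hρ
    refine ⟨ρ₀ x, (mem_orbitAt D v x _).2 ⟨ρ₀, hρ₀, rfl⟩, ?_⟩
    simp [MulAut.conj_apply]
  · rintro ⟨z, hz, rfl⟩
    obtain ⟨ρ₀, hρ₀, rfl⟩ := (mem_orbitAt D v x z).1 hz
    refine ⟨π * ρ₀ * π⁻¹, ?_, by simp⟩
    rw [hE, Subgroup.mem_map]
    exact ⟨ρ₀, hρ₀, rfl⟩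

lemma orbitAt_eq_of_mem (D : PreDecoration P T) (v : T.V) (ρ : Equiv.Perm (Fin P.d))
    (hρ : ρ ∈ monAt D v) (x : Fin P.d) :
    orbitAt D v (ρ x) = orbitAt D v x := by
  ext y
  rw [mem_orbitAt, mem_orbitAt]
  constructor
  · rintro ⟨π, hπ, rfl⟩
    exact ⟨π * ρ, mul_mem hπ hρ, rfl⟩
  · rintro ⟨π, hπ, rfl⟩
    refine ⟨π * ρ⁻¹, mul_mem hπ (inv_mem hρ), ?_⟩
    simp

lemma orbitAt_image_of_mem (D : PreDecoration P T) (v : T.V) (ρ : Equiv.Perm (Fin P.d))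
    (hρ : ρ ∈ monAt D v) (x : Fin P.d) :
    (orbitAt D v x).image ρ = orbitAt D v x := by
  ext y
  rw [Finset.mem_image]
  constructor
  · rintro ⟨z, hz, rfl⟩
    obtain ⟨π, hπ, rfl⟩ := (mem_orbitAt D v x z).1 hz
    exact (mem_orbitAt D v x _).2 ⟨ρ * π, mul_mem hρ hπ, rfl⟩
  · intro hy
    obtain ⟨π, hπ, rfl⟩ := (mem_orbitAt D v x y).1 hy
    exact ⟨(ρ⁻¹ * π) x, (mem_orbitAt D v x _).2 ⟨ρ⁻¹ * π, mul_mem (inv_mem hρ) hπ, rfl⟩,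
      by simp⟩

lemma mem_orbitOfFinset (D : PreDecoration P T) (v : T.V) (c : Finset (Fin P.d))
    (y : Fin P.d) :
    y ∈ orbitOfFinset D v c ↔ ∃ x ∈ c, y ∈ orbitAt D v x := by
  simp [orbitOfFinset]

lemma orbitOfFinset_conj (D E : PreDecoration P T) (v : T.V)
    (τ σc : Equiv.Perm (Fin P.d))
    (h : ∀ x, orbitAt E v (σc x) = (orbitAt D v x).image τ) (c : Finset (Fin P.d)) :
    orbitOfFinset E v (c.image σc) = (orbitOfFinset D v c).image τ := by
  ext y
  rw [mem_orbitOfFinset, Finset.mem_image]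
  constructor
  · rintro ⟨x', hx', hy⟩
    rw [Finset.mem_image] at hx'
    obtain ⟨x, hx, rfl⟩ := hx'
    rw [h x, Finset.mem_image] at hy
    obtain ⟨z, hz, rfl⟩ := hy
    exact ⟨z, (mem_orbitOfFinset D v c z).2 ⟨x, hx, hz⟩, rfl⟩
  · rintro ⟨z, hz, rfl⟩
    obtain ⟨x, hx, hzx⟩ := (mem_orbitOfFinset D v c z).1 hz
    refine ⟨σc x, Finset.mem_image_of_mem _ hx, ?_⟩
    rw [h x, Finset.mem_image]
    exact ⟨z, hzx, rfl⟩

/-- The abstract core: if `E` is obtained from `D` by conjugating the permutation at each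
half-edge `k` by `σ k`, the cycle labels accordingly, and the orbits at each vertex `v`
are transported by `τ v` compatibly, then the source graphs are isomorphic. -/
lemma iso_core (D E : PreDecoration P T)
    (τ : T.V → Equiv.Perm (Fin P.d)) (σ : T.H → Equiv.Perm (Fin P.d))
    (h1 : ∀ k, E.mon k = σ k * D.mon k * (σ k)⁻¹)
    (h2 : ∀ a, E.cyc a = σ (T.leg (P.phi a)) (D.cyc a))
    (h3 : ∀ k, σ (T.pair k) = σ k)
    (h4 : ∀ k x, orbitAt E (T.base k) (σ k x) = (orbitAt D (T.base k) x).image (τ (T.base k)))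
    (h5 : ∀ v x, orbitAt E v (τ v x) = (orbitAt D v x).image (τ v))
    (h6 : ∀ v O, IsOrbitAt D v O → localSum E v (O.image (τ v)) = localSum D v O) :
    IsoSourceGraphs D E := by
  refine ⟨fun p => (p.1, p.2.image (τ p.1)), fun q => (q.1, q.2.image (σ q.1)),
    ⟨?_, ?_, ?_⟩, ⟨?_, ?_, ?_⟩, ?_, ?_, ?_, ?_⟩
  · rintro ⟨v, O⟩ ⟨x, hx⟩
    dsimp only at hx
    subst hx
    exact ⟨τ v x, (h5 v x).symm⟩
  · rintro ⟨v, O⟩ _ ⟨v', O'⟩ _ hE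
    have hfst : v = v' := congrArg Prod.fst hE
    subst hfst
    have hsnd : O.image (τ v) = O'.image (τ v) := congrArg Prod.snd hE
    exact congrArg (Prod.mk v) (Finset.image_injective (τ v).injective hsnd)
  · rintro ⟨v, O⟩ ⟨y, hy⟩
    dsimp only at hy
    subst hy
    refine ⟨(v, orbitAt D v ((τ v)⁻¹ y)), ⟨(τ v)⁻¹ y, rfl⟩, ?_⟩
    show (v, (orbitAt D v ((τ v)⁻¹ y)).image (τ v)) = (v, orbitAt E v y)
    have h5' := h5 v ((τ v)⁻¹ y)
    rw [show ∀ (e : Equiv.Perm _) x, e (e⁻¹ x) = x from fun e x => e.apply_symm_apply x] at h5'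
    rw [h5']
  · rintro ⟨k, c⟩ ⟨x, hx⟩
    dsimp only at hx
    subst hx
    refine ⟨σ k x, ?_⟩
    rw [h1 k, cycleFinset_conj]
  · rintro ⟨k, c⟩ _ ⟨k', c'⟩ _ hE
    have hfst : k = k' := congrArg Prod.fst hE
    subst hfst
    have hsnd : c.image (σ k) = c'.image (σ k) := congrArg Prod.snd hE
    exact congrArg (Prod.mk k) (Finset.image_injective (σ k).injective hsnd)
  · rintro ⟨k, c⟩ ⟨y, hy⟩
    dsimp only at hy
    subst hy
    refine ⟨(k, cycleFinset (D.mon k) ((σ k)⁻¹ y)), ⟨(σ k)⁻¹ y, rfl⟩, ?_⟩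
    show (k, (cycleFinset (D.mon k) ((σ k)⁻¹ y)).image (σ k)) = (k, cycleFinset (E.mon k) y)
    have hc := cycleFinset_conj (σ k) (D.mon k) ((σ k)⁻¹ y)
    rw [show ∀ (e : Equiv.Perm _) x, e (e⁻¹ x) = x from fun e x => e.apply_symm_apply x] at hc
    rw [h1 k, ← hc]
  · rintro ⟨k, c⟩ _
    show (T.base k, orbitOfFinset E (T.base k) (c.image (σ k)))
      = (T.base k, (orbitOfFinset D (T.base k) c).image (τ (T.base k)))
    rw [orbitOfFinset_conj D E (T.base k) (τ (T.base k)) (σ k) (fun x => h4 k x) c]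
  · rintro ⟨k, c⟩ _
    show (T.pair k, c.image (σ (T.pair k))) = (T.pair k, c.image (σ k))
    rw [h3 k]
  · rintro ⟨v, O⟩ hp n
    have hsum := h6 v O hp
    have hcard : (O.image (τ v)).card = O.card :=
      Finset.card_image_of_injective O (τ v).injective
    show LocalRH D v O n ↔ LocalRH E v (O.image (τ v)) n
    unfold LocalRH
    rw [hsum, hcard]
  · intro a
    show (T.leg (P.phi a),
        (cycleFinset (D.mon (T.leg (P.phi a))) (D.cyc a)).image (σ (T.leg (P.phi a))))
      = (T.leg (P.phi a), cycleFinset (E.mon (T.leg (P.phi a))) (E.cyc a))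
    rw [h1 (T.leg (P.phi a)), h2 a, cycleFinset_conj]

lemma iso_globalConj (D : PreDecoration P T) (τ0 : Equiv.Perm (Fin P.d)) :
    IsoSourceGraphs D (globalConj τ0 D) := by
  have hmap : ∀ v : T.V,
      monAt (globalConj τ0 D) v = (monAt D v).map (MulAut.conj τ0).toMonoidHom :=
    fun v => monAt_map_conj D _ v τ0 (fun k _ => rfl)
  apply iso_core D _ (fun _ => τ0) (fun _ => τ0)
  · intro k; rfl
  · intro a; rfl
  · intro k; rfl
  · intro k x; exact orbitAt_conj D _ _ τ0 (hmap _) x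
  · intro v x; exact orbitAt_conj D _ v τ0 (hmap v) x
  · intro v O _
    unfold localSum
    apply Finset.sum_congr rfl
    intro k _
    exact sum_cyclesIn_conj τ0 (D.mon k) O

/-- The common core of the two braid moves. -/
lemma iso_braid (hT : T.IsStableTree) (D E : PreDecoration P T) (h : T.H)
    (ρ : Equiv.Perm (Fin P.d))
    (hρ : ∃ h₀, T.base h₀ = T.base h ∧ (ρ = D.mon h₀ ∨ ρ = (D.mon h₀)⁻¹))
    (hmonE : ∀ k, E.mon k = if T.InSide h k then ρ * D.mon k * ρ⁻¹ else D.mon k)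
    (hcycE : ∀ a, E.cyc a = if T.InSide h (T.leg (P.phi a)) then ρ (D.cyc a) else D.cyc a) :
    IsoSourceGraphs D E := by
  obtain ⟨h₀, hb₀, hρ₀⟩ := hρ
  have hnl := hT.1
  set Reg : T.V → Prop := fun v => T.pair h ≠ h ∧
    Relation.ReflTransGen (T.AdjAvoid (T.base h)) (T.base (T.pair h)) v with hReg
  have regA : ¬ Reg (T.base h) := by
    rintro ⟨hph, hr⟩
    exact bm_avoid_ne T (hnl h hph) hr rfl
  have factB : ∀ k, k ≠ h → (T.InSide h k ↔ Reg (T.base k)) := by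
    intro k hk
    unfold BMarkedGraph.InSide
    rw [hReg]
    tauto
  have inSideH : T.InSide h h := Or.inl rfl
  set σ : T.H → Equiv.Perm (Fin P.d) := fun k => if T.InSide h k then ρ else 1 with hσ
  set τ : T.V → Equiv.Perm (Fin P.d) := fun v => if Reg v then ρ else 1 with hτ
  have hτbase : τ (T.base h) = 1 := by rw [hτ]; simp only [if_neg regA]
  have hρmem : ρ ∈ monAt D (T.base h) := by
    have hmem : D.mon h₀ ∈ monAt D (T.base h) :=
      Subgroup.subset_closure ⟨h₀, hb₀, rfl⟩
    rcases hρ₀ with rfl | rfl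
    · exact hmem
    · exact inv_mem hmem
  have hEh : E.mon h = ρ * D.mon h * ρ⁻¹ := by rw [hmonE h, if_pos inSideH]
  have hEk : ∀ k, k ≠ h → T.base k = T.base h → E.mon k = D.mon k := by
    intro k hk hkv
    rw [hmonE k, if_neg]
    rw [factB k hk, hkv]
    exact regA
  have monE_off : ∀ v, v ≠ T.base h → ∀ k, T.base k = v →
      E.mon k = τ v * D.mon k * (τ v)⁻¹ := by
    intro v hv k hkv
    have hkh : k ≠ h := by
      intro hEq
      apply hv
      rw [← hkv, hEq]
    rw [hmonE k, hτ]
    simp only []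
    rw [factB k hkh, hkv]
    by_cases hR : Reg v
    · rw [if_pos hR, if_pos hR]
    · rw [if_neg hR, if_neg hR]
      simp
  have monAt_off : ∀ v, v ≠ T.base h →
      monAt E v = (monAt D v).map (MulAut.conj (τ v)).toMonoidHom :=
    fun v hv => monAt_map_conj D E v (τ v) (monE_off v hv)
  have hρE : ρ ∈ monAt E (T.base h) := by
    by_cases hh₀ : h₀ = h
    · subst hh₀
      rcases hρ₀ with rfl | rfl
      · refine Subgroup.subset_closure ⟨h₀, rfl, ?_⟩
        rw [hEh]; group
      · refine inv_mem (Subgroup.subset_closure ⟨h₀, rfl, ?_⟩)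
        rw [hEh]; group
    · have hEh₀ : E.mon h₀ = D.mon h₀ := hEk h₀ hh₀ hb₀
      rcases hρ₀ with rfl | rfl
      · exact Subgroup.subset_closure ⟨h₀, hb₀, hEh₀.symm⟩
      · exact inv_mem (Subgroup.subset_closure ⟨h₀, hb₀, hEh₀.symm⟩)
  have monAt_base : monAt E (T.base h) = monAt D (T.base h) := by
    apply le_antisymm
    · apply (Subgroup.closure_le _).2
      rintro s ⟨k, hkv, rfl⟩
      by_cases hk : k = h
      · subst hk
        rw [hEh]
        exact mul_mem (mul_mem hρmem (Subgroup.subset_closure ⟨k, hkv, rfl⟩))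
          (inv_mem hρmem)
      · rw [hEk k hk hkv]
        exact Subgroup.subset_closure ⟨k, hkv, rfl⟩
    · apply (Subgroup.closure_le _).2
      rintro s ⟨k, hkv, rfl⟩
      by_cases hk : k = h
      · subst hk
        have hD : D.mon k = ρ⁻¹ * E.mon k * ρ := by rw [hEh]; group
        rw [hD]
        exact mul_mem (mul_mem (inv_mem hρE) (Subgroup.subset_closure ⟨k, hkv, rfl⟩)) hρE
      · rw [show D.mon k = E.mon k from (hEk k hk hkv).symm]
        exact Subgroup.subset_closure ⟨k, hkv, rfl⟩
  have orbitAt_base : ∀ x, orbitAt E (T.base h) x = orbitAt D (T.base h) x := by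
    intro x
    unfold orbitAt
    rw [monAt_base]
  have hh5 : ∀ v x, orbitAt E v (τ v x) = (orbitAt D v x).image (τ v) := by
    intro v x
    by_cases hv : v = T.base h
    · subst hv
      rw [hτbase]
      simp only [Equiv.Perm.coe_one, id_eq, Finset.image_id]
      exact orbitAt_base x
    · exact orbitAt_conj D E v (τ v) (monAt_off v hv) x
  apply iso_core D E τ σ
  · intro k
    rw [hmonE k, hσ]
    by_cases hin : T.InSide h k
    · simp only [if_pos hin]
    · simp only [if_neg hin]
      simp
  · intro a
    rw [hcycE a, hσ]
    by_cases hin : T.InSide h (T.leg (P.phi a))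
    · simp only [if_pos hin]
    · simp only [if_neg hin]
      simp
  · intro k
    rw [hσ]
    simp only [inSide_pair T hT]
  · intro k x
    by_cases hv : T.base k = T.base h
    · rw [hv, hτbase]
      simp only [Equiv.Perm.coe_one, id_eq, Finset.image_id]
      by_cases hk : k = h
      · subst hk
        rw [hσ]
        simp only [if_pos inSideH]
        rw [orbitAt_base]
        exact orbitAt_eq_of_mem D _ ρ hρmem x
      · rw [hσ]
        simp only [if_neg ((factB k hk).not.2 (by rw [hv]; exact regA) :
          ¬ T.InSide h k)]
        simp only [Equiv.Perm.coe_one, id_eq]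
        exact orbitAt_base x
    · have hkh : k ≠ h := by
        intro hEq
        apply hv
        rw [hEq]
      have hστ : σ k = τ (T.base k) := by
        rw [hσ, hτ]
        dsimp only
        exact if_congr (factB k hkh) rfl rfl
      rw [hστ]
      exact hh5 (T.base k) x
  · exact hh5
  · intro v O hO
    by_cases hv : v = T.base h
    · subst hv
      rw [hτbase]
      simp only [Equiv.Perm.coe_one, id_eq, Finset.image_id]
      unfold localSum
      apply Finset.sum_congr rfl
      intro k hk
      rw [Finset.mem_filter] at hk
      by_cases hkh : k = h
      · subst hkh
        rw [hEh]
        obtain ⟨x0, rfl⟩ := hO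
        conv_lhs => rw [← orbitAt_image_of_mem D _ ρ hρmem x0]
        exact sum_cyclesIn_conj ρ (D.mon k) _
      · rw [hEk k hkh hk.2]
    · unfold localSum
      apply Finset.sum_congr rfl
      intro k hk
      rw [Finset.mem_filter] at hk
      rw [monE_off v hv k hk.2]
      exact sum_cyclesIn_conj (τ v) (D.mon k) O

lemma iso_refl (D : PreDecoration P T) : IsoSourceGraphs D D :=
  ⟨id, id, Set.bijOn_id _, Set.bijOn_id _, fun _ _ => rfl, fun _ _ => rfl,
    fun _ _ _ => Iff.rfl, fun _ => rfl⟩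

lemma iso_trans {D1 D2 D3 : PreDecoration P T} (h12 : IsoSourceGraphs D1 D2)
    (h23 : IsoSourceGraphs D2 D3) : IsoSourceGraphs D1 D3 := by
  obtain ⟨eV, eH, hbV, hbH, hatt, hpair, hloc, hleg⟩ := h12
  obtain ⟨eV', eH', hbV', hbH', hatt', hpair', hloc', hleg'⟩ := h23
  refine ⟨eV' ∘ eV, eH' ∘ eH, hbV'.comp hbV, hbH'.comp hbH, ?_, ?_, ?_, ?_⟩
  · intro q hq
    show attachVertex D3 (eH' (eH q)) = eV' (eV (attachVertex D1 q))
    rw [hatt' _ (hbH.1 hq), hatt _ hq]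
  · intro q hq
    show eH' (eH (T.pair q.1, q.2)) = _
    rw [hpair _ hq, hpair' _ (hbH.1 hq)]
    rfl
  · intro p hp n
    exact (hloc p hp n).trans (hloc' _ (hbV.1 hp) n)
  · intro a
    show eH' (eH _) = _
    rw [hleg a, hleg' a]

lemma base_ord_braidACW (D : PreDecoration P T) (h : T.H)
    (hQ : ∀ k, T.base (D.ord k) = T.base k) :
    ∀ k, T.base ((braidACW D h).ord k) = T.base k := by
  have hswap : ∀ x, T.base (Equiv.swap h (D.ord h) x) = T.base x := by
    intro x
    rcases eq_or_ne x h with rfl | hx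
    · rw [Equiv.swap_apply_left]; exact hQ x
    rcases eq_or_ne x (D.ord h) with rfl | hx2
    · rw [Equiv.swap_apply_right]; exact (hQ h).symm
    · rw [Equiv.swap_apply_of_ne_of_ne hx hx2]
  intro k
  show T.base ((Equiv.swap h (D.ord h) * D.ord * (Equiv.swap h (D.ord h))⁻¹) k) = T.base k
  rw [Equiv.swap_inv, Equiv.Perm.mul_apply, Equiv.Perm.mul_apply, hswap, hQ, hswap]

lemma base_ord_braidCW (D : PreDecoration P T) (h : T.H)
    (hQ : ∀ k, T.base (D.ord k) = T.base k) :
    ∀ k, T.base ((braidCW D h).ord k) = T.base k := by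
  have hb : T.base (D.ord⁻¹ h) = T.base h := by
    have := hQ (D.ord⁻¹ h)
    rw [show ∀ (e : Equiv.Perm _) x, e (e⁻¹ x) = x from fun e x => e.apply_symm_apply x] at this
    exact this.symm
  have hswap : ∀ x, T.base (Equiv.swap h (D.ord⁻¹ h) x) = T.base x := by
    intro x
    rcases eq_or_ne x h with rfl | hx
    · rw [Equiv.swap_apply_left]; exact hb
    rcases eq_or_ne x (D.ord⁻¹ h) with rfl | hx2
    · rw [Equiv.swap_apply_right]; exact hb.symm
    · rw [Equiv.swap_apply_of_ne_of_ne hx hx2]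
  intro k
  show T.base ((Equiv.swap h (D.ord⁻¹ h) * D.ord * (Equiv.swap h (D.ord⁻¹ h))⁻¹) k)
    = T.base k
  rw [Equiv.swap_inv, Equiv.Perm.mul_apply, Equiv.Perm.mul_apply, hswap, hQ, hswap]

end IsoHelpers

/-- Hurwitz equivalent `P`-decorations of a `B`-marked stable tree have
isomorphic source graphs, as `A`-marked vertex-weighted graphs. -/
theorem isoSourceGraphs_of_hurwitzEquiv (P : Portrait B A) (T : BMarkedGraph B)
    (hT : T.IsStableTree) (D₁ D₂ : PreDecoration P T)
    (hD₁ : IsDecoration P T D₁) (hD₂ : IsDecoration P T D₂)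
    (hEquiv : HurwitzEquiv P T D₁ D₂) :
    IsoSourceGraphs D₁ D₂ := by
  have key : ∀ D D' : PreDecoration P T, HurwitzEquiv P T D D' →
      (∀ k, T.base (D.ord k) = T.base k) →
      (∀ k, T.base (D'.ord k) = T.base k) ∧ IsoSourceGraphs D D' := by
    intro D D' hE
    induction hE with
    | refl => intro hQ; exact ⟨hQ, iso_refl _⟩
    | @tail C C' _ hstep ih =>
      intro hQ
      obtain ⟨hQC, hiso⟩ := ih hQ
      cases hstep with
      | conj τ0 _ =>
        exact ⟨hQC, iso_trans hiso (iso_globalConj _ τ0)⟩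
      | acw _ h =>
        refine ⟨base_ord_braidACW C h hQC, iso_trans hiso ?_⟩
        apply iso_braid hT C (braidACW C h) h (C.mon (C.ord h))
        · exact ⟨C.ord h, hQC h, Or.inl rfl⟩
        · intro k; rfl
        · intro a; rfl
      | cw _ h =>
        refine ⟨base_ord_braidCW C h hQC, iso_trans hiso ?_⟩
        apply iso_braid hT C (braidCW C h) h ((C.mon (C.ord⁻¹ h))⁻¹)
        · refine ⟨C.ord⁻¹ h, ?_, Or.inr rfl⟩
          have := hQC (C.ord⁻¹ h)
          rw [show ∀ (e : Equiv.Perm _) x, e (e⁻¹ x) = x from fun e x => e.apply_symm_apply x] at this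
          exact this.symm
        · intro k
          show (braidCW C h).mon k = _
          unfold braidCW
          by_cases hin : T.InSide h k
          · simp only [if_pos hin, inv_inv]
          · simp only [if_neg hin]
        · intro a; rfl
  exact (key D₁ D₂ hEquiv hD₁.1).2
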